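/- Let F_q be a finite field and n ≥ 1, k ≥ 2, and let 3 ≤ h < n with h > (1 - 1/k)n - 1. Then for every monic A of degree n, ∑_{f ∈ I(A;h)} d_k(f) = q^{h+1}·C(n+k-1, k-1) exactly; i.e., the remainder Δ_k(A;h) = ∑_{f ∈ I(A;h)} d_k(f) - q^{h+1}·C(n+k-1,k-1) vanishes identically when h > (1-1/k)n - 1. -/

import Mathlib

open Polynomial

/-- The number of ways to write `f` as an ordered product of `k` monic polynomials. -/
noncomputable def polyDivisorFun (Fq : Type*) [Field Fq] (k : ℕ) (f : Polynomial Fq) : ℕ :=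
  Nat.card {a : Fin k → Polynomial Fq // (∀ i, (a i).Monic) ∧ ∏ i, a i = f}

section Aux

lemma withBot_lt_succ_iff (a : WithBot ℕ) (h : ℕ) :
    a < ((h + 1 : ℕ) : WithBot ℕ) ↔ a ≤ ((h : ℕ) : WithBot ℕ) := by
  cases a with
  | bot => simp [WithBot.bot_lt_iff_ne_bot]
  | coe n =>
      rw [Nat.cast_withBot, Nat.cast_withBot, WithBot.coe_lt_coe, WithBot.coe_le_coe]
      exact Nat.lt_succ_iff

lemma withBot_add_lt_iff {e t : ℕ} (he : e ≤ t) (d : WithBot ℕ) :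
    ((e : ℕ) : WithBot ℕ) + d < ((t + 1 : ℕ) : WithBot ℕ) ↔
      d < ((t + 1 - e : ℕ) : WithBot ℕ) := by
  cases d with
  | bot => simp [WithBot.bot_lt_iff_ne_bot]
  | coe x =>
      rw [Nat.cast_withBot, Nat.cast_withBot, Nat.cast_withBot, ← WithBot.coe_add,
        WithBot.coe_lt_coe, WithBot.coe_lt_coe]
      omega

variable {Fq : Type*} [Field Fq] [Fintype Fq]

/-- The set of polynomials of degree `< m` is equivalent to `degreeLT`. -/
noncomputable def degLTEquiv (m : ℕ) :
    {p : Polynomial Fq // p.degree < ((m : ℕ) : WithBot ℕ)} ≃ (Fin m → Fq) :=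
  ((Equiv.subtypeEquivRight (fun _ => (Polynomial.mem_degreeLT (R := Fq)).symm)).trans
    (Polynomial.degreeLTEquiv Fq m).toEquiv)

lemma finite_degLT (m : ℕ) : Finite {p : Polynomial Fq // p.degree < ((m : ℕ) : WithBot ℕ)} :=
  Finite.of_equiv _ (degLTEquiv (Fq := Fq) m).symm

lemma card_degLT (m : ℕ) :
    Nat.card {p : Polynomial Fq // p.degree < ((m : ℕ) : WithBot ℕ)} = Fintype.card Fq ^ m := by
  rw [Nat.card_congr (degLTEquiv (Fq := Fq) m)]
  simp [Nat.card_eq_fintype_card]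

/-- Translation equivalence. -/
noncomputable def ballEquiv (B : Polynomial Fq) (m : ℕ) :
    {p : Polynomial Fq // (p - B).degree < ((m : ℕ) : WithBot ℕ)} ≃
      {p : Polynomial Fq // p.degree < ((m : ℕ) : WithBot ℕ)} where
  toFun p := ⟨p.1 - B, p.2⟩
  invFun r := ⟨r.1 + B, by simpa using r.2⟩
  left_inv p := by simp
  right_inv r := by simp

lemma finite_ball (B : Polynomial Fq) (m : ℕ) :
    Finite {p : Polynomial Fq // (p - B).degree < ((m : ℕ) : WithBot ℕ)} :=
  haveI := finite_degLT (Fq := Fq) m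
  Finite.of_equiv _ (ballEquiv B m).symm

lemma card_ball (B : Polynomial Fq) (m : ℕ) :
    Nat.card {p : Polynomial Fq // (p - B).degree < ((m : ℕ) : WithBot ℕ)} =
      Fintype.card Fq ^ m := by
  rw [Nat.card_congr (ballEquiv B m), card_degLT]

lemma finite_subtype_poly {P : Polynomial Fq → Prop} (N : ℕ)
    (hP : ∀ c, P c → c.degree < ((N : ℕ) : WithBot ℕ)) : Finite {c : Polynomial Fq // P c} := by
  haveI := finite_degLT (Fq := Fq) N
  refine Finite.of_injective
    (fun c => (⟨c.1, hP c.1 c.2⟩ : {p : Polynomial Fq // p.degree < ((N : ℕ) : WithBot ℕ)})) ?_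
  intro a b hab
  have := congrArg Subtype.val hab
  exact Subtype.ext this

lemma finite_subtype_pi_poly {k : ℕ} {P : (Fin k → Polynomial Fq) → Prop} (N : ℕ)
    (hP : ∀ a, P a → ∀ i, (a i).degree < ((N : ℕ) : WithBot ℕ)) :
    Finite {a : Fin k → Polynomial Fq // P a} := by
  haveI := finite_degLT (Fq := Fq) N
  refine Finite.of_injective
    (fun a => (fun i => ⟨a.1 i, hP a.1 a.2 i⟩ :
      Fin k → {p : Polynomial Fq // p.degree < ((N : ℕ) : WithBot ℕ)})) ?_
  intro a b hab
  refine Subtype.ext (funext fun i => ?_)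
  have := congrArg Subtype.val (congrFun hab i)
  exact this

lemma monic_iff_sub_pow (m : ℕ) (p : Polynomial Fq) :
    (p.Monic ∧ p.natDegree = m) ↔ (p - X ^ m).degree < ((m : ℕ) : WithBot ℕ) := by
  constructor
  · rintro ⟨hm, rfl⟩
    have h1 : p.degree = ((p.natDegree : ℕ) : WithBot ℕ) := degree_eq_natDegree hm.ne_zero
    have h2 : p.degree = (X ^ p.natDegree : Polynomial Fq).degree := by
      rw [h1, degree_X_pow]
    have := Polynomial.degree_sub_lt h2 hm.ne_zero
      (by rw [hm.leadingCoeff, leadingCoeff_X_pow])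
    rwa [h1] at this
  · intro hlt
    have hmon : (X ^ m + (p - X ^ m)).Monic := monic_X_pow_add hlt
    have heq : X ^ m + (p - X ^ m) = p := by ring
    rw [heq] at hmon
    refine ⟨hmon, ?_⟩
    have hdeg : p.degree = ((m : ℕ) : WithBot ℕ) := by
      rw [← heq, degree_add_eq_left_of_degree_lt (by rwa [degree_X_pow]), degree_X_pow]
    exact natDegree_eq_of_degree_eq_some hdeg

lemma finite_monic (m : ℕ) :
    Finite {p : Polynomial Fq // p.Monic ∧ p.natDegree = m} := by
  haveI := finite_ball (X ^ m : Polynomial Fq) m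
  exact Finite.of_equiv _ (Equiv.subtypeEquivRight (fun p => (monic_iff_sub_pow m p))).symm

lemma card_monic (m : ℕ) :
    Nat.card {p : Polynomial Fq // p.Monic ∧ p.natDegree = m} = Fintype.card Fq ^ m := by
  rw [Nat.card_congr (Equiv.subtypeEquivRight (fun p => (monic_iff_sub_pow m p)))]
  exact card_ball _ m

/-- If `f` is close to a monic polynomial `A` of degree `n`, it is itself monic of degree `n`. -/
lemma monic_of_close {A f : Polynomial Fq} {n t : ℕ} (hA : A.Monic) (hAdeg : A.natDegree = n)
    (htn : t < n) (hf : (f - A).degree < ((t + 1 : ℕ) : WithBot ℕ)) :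
    f.Monic ∧ f.natDegree = n := by
  have hAd : A.degree = ((n : ℕ) : WithBot ℕ) := by
    rw [degree_eq_natDegree hA.ne_zero, hAdeg]
  have hlt : (f - A).degree < A.degree := by
    rw [hAd]
    exact hf.trans_le (Nat.cast_le.2 (by omega))
  have heq : A + (f - A) = f := by ring
  constructor
  · have := hA.add_of_left hlt
    rwa [heq] at this
  · have : f.degree = ((n : ℕ) : WithBot ℕ) := by
      rw [← heq, degree_add_eq_left_of_degree_lt hlt, hAd]
    exact natDegree_eq_of_degree_eq_some this

end Aux
section Core

variable {Fq : Type*} [Field Fq] [Fintype Fq]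

lemma nat_card_sigma {ι : Type*} [Fintype ι] (g : ι → Type*) [∀ i, Finite (g i)] :
    Nat.card (Σ i, g i) = ∑ i, Nat.card (g i) := by
  letI : ∀ i, Fintype (g i) := fun i => Fintype.ofFinite _
  simp [Nat.card_eq_fintype_card]

/-- The key counting step: the number of monic `c` of degree `m` with `B·c` in the
interval of radius `h` around `A` is exactly `q^(h+1-(n-m))`. -/
lemma core_iff {A B : Polynomial Fq} {n h m : ℕ} (hA : A.Monic) (hAn : A.natDegree = n)
    (hB : B.Monic) (hBdeg : B.natDegree = n - m) (hm : m ≤ n) (hBh : n - m ≤ h) (hhn : h < n)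
    (c : Polynomial Fq) :
    ((c.Monic ∧ c.natDegree = m) ∧ (B * c - A).degree < ((h + 1 : ℕ) : WithBot ℕ)) ↔
      (c - A /ₘ B).degree < ((h + 1 - (n - m) : ℕ) : WithBot ℕ) := by
  set e := n - m with he
  set Q := A /ₘ B with hQ
  have hBA : B.degree ≤ A.degree := by
    rw [degree_eq_natDegree hA.ne_zero, degree_eq_natDegree hB.ne_zero, hAn, hBdeg]
    exact Nat.cast_le.2 (by omega)
  have hQm : Q.Monic := by
    have := leadingCoeff_divByMonic_of_monic hB hBA
    rw [hA.leadingCoeff] at this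
    exact this
  have hQdeg : Q.natDegree = m := by
    rw [hQ, natDegree_divByMonic A hB, hAn, hBdeg]
    omega
  have hrem : (A %ₘ B).degree < ((e : ℕ) : WithBot ℕ) := by
    have := degree_modByMonic_lt A hB
    rwa [degree_eq_natDegree hB.ne_zero, hBdeg] at this
  have hremh : (A %ₘ B).degree < ((h + 1 : ℕ) : WithBot ℕ) :=
    hrem.trans_le (Nat.cast_le.2 (by omega))
  have hkey : B * c - A = B * (c - Q) - A %ₘ B := by
    conv_lhs => rw [← modByMonic_add_div A B]
    ring
  -- step 1+2
  have hiff : (B * c - A).degree < ((h + 1 : ℕ) : WithBot ℕ) ↔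
      (c - Q).degree < ((h + 1 - e : ℕ) : WithBot ℕ) := by
    rw [hkey]
    constructor
    · intro hlt
      have h1 : (B * (c - Q)).degree < ((h + 1 : ℕ) : WithBot ℕ) := by
        have : B * (c - Q) = (B * (c - Q) - A %ₘ B) + A %ₘ B := by ring
        rw [this]
        exact (degree_add_le _ _).trans_lt (max_lt hlt hremh)
      rw [degree_mul, degree_eq_natDegree hB.ne_zero, hBdeg] at h1
      exact (withBot_add_lt_iff (by omega) _).1 h1
    · intro hlt
      have h1 : (B * (c - Q)).degree < ((h + 1 : ℕ) : WithBot ℕ) := by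
        rw [degree_mul, degree_eq_natDegree hB.ne_zero, hBdeg]
        exact (withBot_add_lt_iff (by omega) _).2 hlt
      exact (degree_sub_le _ _).trans_lt (max_lt h1 hremh)
  constructor
  · rintro ⟨_, hball⟩
    exact (hiff.1 hball)
  · intro hlt
    have hmc : c.Monic ∧ c.natDegree = m := by
      have h' : (c - Q).degree < ((h - e + 1 : ℕ) : WithBot ℕ) := by
        have : (h + 1 - e : ℕ) = (h - e + 1 : ℕ) := by omega
        rwa [this] at hlt
      exact monic_of_close hQm hQdeg (by omega) h'
    exact ⟨hmc, hiff.2 hlt⟩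

lemma card_core {A B : Polynomial Fq} {n h m : ℕ} (hA : A.Monic) (hAn : A.natDegree = n)
    (hB : B.Monic) (hBdeg : B.natDegree = n - m) (hm : m ≤ n) (hBh : n - m ≤ h) (hhn : h < n) :
    Nat.card {c : Polynomial Fq //
        (c.Monic ∧ c.natDegree = m) ∧ (B * c - A).degree < ((h + 1 : ℕ) : WithBot ℕ)} =
      Fintype.card Fq ^ (h + 1 - (n - m)) := by
  rw [Nat.card_congr (Equiv.subtypeEquivRight
    (fun c => core_iff hA hAn hB hBdeg hm hBh hhn c))]
  exact card_ball _ _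

lemma finite_core {A B : Polynomial Fq} {n h m : ℕ} (hA : A.Monic) (hAn : A.natDegree = n)
    (hB : B.Monic) (hBdeg : B.natDegree = n - m) (hm : m ≤ n) (hBh : n - m ≤ h) (hhn : h < n) :
    Finite {c : Polynomial Fq //
        (c.Monic ∧ c.natDegree = m) ∧ (B * c - A).degree < ((h + 1 : ℕ) : WithBot ℕ)} := by
  haveI := finite_ball (A /ₘ B) (h + 1 - (n - m))
  exact Finite.of_equiv _ (Equiv.subtypeEquivRight
    (fun c => core_iff hA hAn hB hBdeg hm hBh hhn c)).symm

lemma exists_big {k n h : ℕ} (hk : 2 ≤ k) (hcond : (k - 1) * n < k * (h + 1))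
    (d : Fin k → ℕ) (hd : ∑ i, d i = n) : ∃ i, n - d i ≤ h := by
  by_contra hcon
  push_neg at hcon
  have h3 : h + 1 ≤ n := by
    have := hcon ⟨0, by omega⟩
    omega
  have h2 : n ≤ k * (n - (h + 1)) := by
    calc n = ∑ i, d i := hd.symm
    _ ≤ ∑ _i : Fin k, (n - (h + 1)) := Finset.sum_le_sum (fun i _ => by have := hcon i; omega)
    _ = k * (n - (h + 1)) := by simp [Finset.sum_const, Finset.card_univ, mul_comm]
  have h4 : k * (n - (h + 1)) + k * (h + 1) = k * n := by
    rw [← Nat.mul_add, Nat.sub_add_cancel h3]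
  have h5 : (k - 1) * n + n = k * n := by
    rw [Nat.sub_one_mul]
    have : n ≤ k * n := Nat.le_mul_of_pos_left n (by omega)
    omega
  set a := k * (h + 1) with ha
  set b := k * (n - (h + 1)) with hb
  set cc := k * n with hc
  set w := (k - 1) * n with hw
  omega

lemma card_compositions (k n : ℕ) (hk : 1 ≤ k) :
    Nat.card {d : Fin k → ℕ // ∑ i, d i = n} = (n + k - 1).choose (k - 1) := by
  rw [Nat.card_congr (Sym.equivNatSumOfFintype (Fin k) n).symm, Nat.card_eq_fintype_card,
    Sym.card_sym_eq_choose]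
  simp only [Fintype.card_fin]
  have h1 : (k - 1 : ℕ) = (n + k - 1) - n := by omega
  rw [h1, Nat.choose_symm (by omega), add_comm k n]

end Core
section Fiber

variable {Fq : Type*} [Field Fq] [Fintype Fq]

lemma card_fiber {A : Polynomial Fq} {n h k : ℕ} (hA : A.Monic) (hAdeg : A.natDegree = n)
    (hhn : h < n) (d : Fin k → ℕ) (hd : ∑ i, d i = n) (i₀ : Fin k) (hi₀ : n - d i₀ ≤ h) :
    Nat.card {a : Fin k → Polynomial Fq //
        (∀ i, (a i).Monic ∧ (a i).natDegree = d i) ∧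
          ((∏ i, a i) - A).degree < ((h + 1 : ℕ) : WithBot ℕ)} =
      Fintype.card Fq ^ (h + 1) := by
  classical
  have hdle : d i₀ ≤ n :=
    hd ▸ Finset.single_le_sum (f := d) (fun i _ => Nat.zero_le _) (Finset.mem_univ i₀)
  set e := n - d i₀ with he
  set β := ∀ j : {j : Fin k // j ≠ i₀}, {p : Polynomial Fq // p.Monic ∧ p.natDegree = d j.1}
    with hβ
  haveI hfinc : ∀ j : {j : Fin k // j ≠ i₀},
      Finite {p : Polynomial Fq // p.Monic ∧ p.natDegree = d j.1} := fun _ => finite_monic _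
  haveI hfinβ : Finite β := by rw [hβ]; infer_instance
  set T := {a : Fin k → Polynomial Fq //
      (∀ i, (a i).Monic ∧ (a i).natDegree = d i) ∧
        ((∏ i, a i) - A).degree < ((h + 1 : ℕ) : WithBot ℕ)} with hT
  set π : T → β := fun a j => ⟨a.1 j.1, a.2.1 j.1⟩ with hπ
  have hsum : ∑ j : {j : Fin k // j ≠ i₀}, d j.1 = e := by
    have h1 : ∑ j ∈ Finset.univ.erase i₀, d j = ∑ j : {j : Fin k // j ≠ i₀}, d j.1 :=
      Finset.sum_subtype (Finset.univ.erase i₀) (by simp) d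
    have h2 : d i₀ + ∑ j ∈ Finset.univ.erase i₀, d j = ∑ i, d i :=
      Finset.add_sum_erase Finset.univ d (Finset.mem_univ i₀)
    omega
  have hBm : ∀ b : β, (∏ j, (b j).1).Monic := fun b =>
    monic_prod_of_monic _ _ (fun j _ => (b j).2.1)
  have hBdeg : ∀ b : β, (∏ j, (b j).1).natDegree = n - d i₀ := by
    intro b
    rw [Polynomial.natDegree_prod _ _ (fun j _ => (b j).2.1.ne_zero), ← he, ← hsum]
    exact Finset.sum_congr rfl (fun j _ => (b j).2.2)
  have prod_eq : ∀ (a : Fin k → Polynomial Fq) (b : β),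
      (∀ j : {j : Fin k // j ≠ i₀}, a j.1 = (b j).1) →
      ∏ i, a i = a i₀ * ∏ j : {j : Fin k // j ≠ i₀}, (b j).1 := by
    intro a b hcomp
    rw [← Finset.mul_prod_erase Finset.univ a (Finset.mem_univ i₀)]
    congr 1
    rw [Finset.prod_subtype (Finset.univ.erase i₀) (p := fun j => j ≠ i₀) (by simp) a]
    exact Finset.prod_congr rfl (fun j _ => hcomp j)
  have einner : ∀ b : β, {x : T // π x = b} ≃
      {c : Polynomial Fq // (c.Monic ∧ c.natDegree = d i₀) ∧
        ((∏ j, (b j).1) * c - A).degree < ((h + 1 : ℕ) : WithBot ℕ)} := by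
    intro b
    refine
      { toFun := fun x => ⟨x.1.1 i₀, ⟨x.1.2.1 i₀, ?_⟩⟩
        invFun := fun c => ⟨⟨fun i => if hi : i = i₀ then c.1 else (b ⟨i, hi⟩).1, ?_, ?_⟩, ?_⟩
        left_inv := ?_
        right_inv := ?_ }
    · have hcomp : ∀ j : {j : Fin k // j ≠ i₀}, x.1.1 j.1 = (b j).1 :=
        fun j => congrArg Subtype.val (congrFun x.2 j)
      have hp := prod_eq x.1.1 b hcomp
      have hx := x.1.2.2
      rwa [hp, mul_comm] at hx
    · intro i
      by_cases hi : i = i₀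
      · subst hi; simpa using c.2.1
      · simpa [dif_neg hi] using (b ⟨i, hi⟩).2
    · have hcomp : ∀ j : {j : Fin k // j ≠ i₀},
          (fun i => if hi : i = i₀ then c.1 else (b ⟨i, hi⟩).1) j.1 = (b j).1 :=
        fun j => by simp [dif_neg j.2]
      have hp := prod_eq (fun i => if hi : i = i₀ then c.1 else (b ⟨i, hi⟩).1) b hcomp
      rw [hp]
      simp only [dif_pos rfl]
      have hx := c.2.2
      rwa [mul_comm] at hx
    · funext j
      exact Subtype.ext (by simp [hπ, dif_neg j.2])
    · intro x
      refine Subtype.ext (Subtype.ext (funext fun i => ?_))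
      by_cases hi : i = i₀
      · subst hi; simp
      · simp only [dif_neg hi]
        exact (congrArg Subtype.val (congrFun x.2 ⟨i, hi⟩)).symm
    · intro c
      exact Subtype.ext (by simp)
  have hfincore : ∀ b : β, Finite
      {c : Polynomial Fq // (c.Monic ∧ c.natDegree = d i₀) ∧
        ((∏ j, (b j).1) * c - A).degree < ((h + 1 : ℕ) : WithBot ℕ)} := fun b =>
    finite_core hA hAdeg (hBm b) (hBdeg b) hdle hi₀ hhn
  haveI : ∀ b : β, Finite {x : T // π x = b} := fun b =>
    haveI := hfincore b
    Finite.of_equiv _ (einner b).symm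
  letI : Fintype β := Fintype.ofFinite β
  have hcardβ : Nat.card β = Fintype.card Fq ^ e := by
    rw [hβ, Nat.card_pi]
    have : ∀ j : {j : Fin k // j ≠ i₀},
        Nat.card {p : Polynomial Fq // p.Monic ∧ p.natDegree = d j.1} =
          Fintype.card Fq ^ d j.1 := fun j => card_monic _
    rw [Finset.prod_congr rfl (fun j _ => this j), Finset.prod_pow_eq_pow_sum]
    rw [hsum]
  calc Nat.card T = Nat.card (Σ b : β, {x : T // π x = b}) :=
        (Nat.card_congr (Equiv.sigmaFiberEquiv π)).symm
    _ = ∑ b : β, Nat.card {x : T // π x = b} := nat_card_sigma _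
    _ = ∑ _b : β, Fintype.card Fq ^ (h + 1 - (n - d i₀)) := by
        refine Finset.sum_congr rfl (fun b _ => ?_)
        rw [Nat.card_congr (einner b)]
        exact card_core hA hAdeg (hBm b) (hBdeg b) hdle hi₀ hhn
    _ = Fintype.card Fq ^ (h + 1) := by
        rw [Finset.sum_const, Finset.card_univ, smul_eq_mul, ← Nat.card_eq_fintype_card,
          hcardβ, ← pow_add]
        congr 1
        omega

end Fiber
/-- For `3 ≤ h < n` with `h > (1 - 1/k)n - 1` (i.e. `(k-1)n < k(h+1)`), the sum of
the divisor function `d_k` over the short interval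
`I(A;h) = {f monic of degree n : deg(f-A) ≤ h}` around any monic `A` of degree `n`
equals `q^{h+1}·C(n+k-1, k-1)` exactly: the remainder `Δ_k(A;h)` vanishes. -/
theorem divisor_short_interval_exact (Fq : Type*) [Field Fq] [Fintype Fq]
    (n h k : ℕ) (hk : 2 ≤ k) (hn : 1 ≤ n) (hh : 3 ≤ h) (hhn : h < n)
    (hcond : (k - 1) * n < k * (h + 1))
    (A : Polynomial Fq) (hA : A.Monic) (hAdeg : A.natDegree = n) :
    ∑ᶠ f ∈ {f : Polynomial Fq | f.Monic ∧ f.natDegree = n ∧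
        (f - A).degree ≤ (h : WithBot ℕ)}, polyDivisorFun Fq k f =
      Fintype.card Fq ^ (h + 1) * (n + k - 1).choose (k - 1) := by
  classical
  -- the short interval is a "ball" around A
  have hS_eq : {f : Polynomial Fq | f.Monic ∧ f.natDegree = n ∧
        (f - A).degree ≤ (h : WithBot ℕ)} =
      {f : Polynomial Fq | (f - A).degree < ((h + 1 : ℕ) : WithBot ℕ)} := by
    ext f
    simp only [Set.mem_setOf_eq]
    constructor
    · rintro ⟨-, -, hle⟩
      exact (withBot_lt_succ_iff _ _).2 hle
    · intro hlt
      obtain ⟨h1, h2⟩ := monic_of_close hA hAdeg hhn hlt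
      exact ⟨h1, h2, (withBot_lt_succ_iff _ _).1 hlt⟩
  haveI hfinS : Finite {f : Polynomial Fq // (f - A).degree < ((h + 1 : ℕ) : WithBot ℕ)} :=
    finite_ball A (h + 1)
  have hSfin : Set.Finite {f : Polynomial Fq | f.Monic ∧ f.natDegree = n ∧
      (f - A).degree ≤ (h : WithBot ℕ)} := by
    rw [hS_eq]
    exact @Set.toFinite _ _ hfinS
  set T : Finset (Polynomial Fq) := hSfin.toFinset with hTdef
  have hmemT : ∀ f : Polynomial Fq, f ∈ T ↔
      (f - A).degree < ((h + 1 : ℕ) : WithBot ℕ) := by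
    intro f
    rw [hTdef, Set.Finite.mem_toFinset, hS_eq]
    exact Iff.rfl
  rw [← Set.Finite.coe_toFinset hSfin, finsum_mem_coe_finset, ← hTdef]
  -- setup for the double-counting
  set SubP := {a : Fin k → Polynomial Fq // ∀ i, (a i).Monic} with hSubP
  set U := {a : Fin k → Polynomial Fq // (∀ i, (a i).Monic) ∧
      ((∏ i, a i) - A).degree < ((h + 1 : ℕ) : WithBot ℕ)} with hU
  have hUdeg : ∀ a : Fin k → Polynomial Fq,
      ((∀ i, (a i).Monic) ∧ ((∏ i, a i) - A).degree < ((h + 1 : ℕ) : WithBot ℕ)) →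
      (∏ i, a i).natDegree = n := by
    rintro a ⟨hmon, hball⟩
    exact (monic_of_close hA hAdeg hhn hball).2
  haveI hUfin : Finite U := by
    rw [hU]
    refine finite_subtype_pi_poly (n + 1) ?_
    rintro a ha i
    have hprod : (∏ i, a i).natDegree = n := hUdeg a ha
    have hne : (∏ i, a i) ≠ 0 := (monic_prod_of_monic _ _ (fun i _ => ha.1 i)).ne_zero
    have hdvd : a i ∣ ∏ i, a i := Finset.dvd_prod_of_mem a (Finset.mem_univ i)
    have hle : (a i).natDegree ≤ n := hprod ▸ Polynomial.natDegree_le_of_dvd hdvd hne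
    refine (Polynomial.degree_le_natDegree).trans_lt ?_
    exact Nat.cast_lt.2 (by omega)
  -- first decomposition:  sum over the interval = count of tuples with product in the interval
  have step1 : ∀ f : Polynomial Fq, polyDivisorFun Fq k f
      = Nat.card {x : SubP // (∏ i, x.1 i) = f} := by
    intro f
    rw [polyDivisorFun]
    exact (Nat.card_congr (Equiv.subtypeSubtypeEquivSubtypeInter
      (fun a : Fin k → Polynomial Fq => ∀ i, (a i).Monic)
      (fun a => ∏ i, a i = f))).symm
  haveI hfib_fin : ∀ f : T, Finite {x : SubP // (∏ i, x.1 i) = f.1} := by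
    intro f
    refine Finite.of_injective (fun x =>
      (⟨x.1.1, x.1.2, by rw [x.2]; exact (hmemT f.1).1 f.2⟩ : U)) ?_
    intro x y hxy
    have := congrArg Subtype.val hxy
    exact Subtype.ext (Subtype.ext this)
  have ecard1 : ∑ f ∈ T, polyDivisorFun Fq k f = Nat.card U := by
    rw [← Finset.sum_coe_sort T (polyDivisorFun Fq k)]
    have hstep : ∀ f : {x // x ∈ T}, polyDivisorFun Fq k f.1 =
        Nat.card {x : SubP // (∏ i, x.1 i) = f.1} := fun f => step1 f.1
    rw [Finset.sum_congr rfl (fun f _ => hstep f)]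
    rw [← nat_card_sigma (fun f : T => {x : SubP // (∏ i, x.1 i) = f.1})]
    refine Nat.card_congr ?_
    refine (Equiv.sigmaSubtypeFiberEquivSubtype (fun x : SubP => ∏ i, x.1 i)
      (p := fun x : SubP => (∏ i, x.1 i) ∈ T) (q := fun f => f ∈ T)
      (fun _ => Iff.rfl)).trans ?_
    refine (Equiv.subtypeEquivRight (fun x => hmemT _)).trans ?_
    exact Equiv.subtypeSubtypeEquivSubtypeInter
      (fun a : Fin k → Polynomial Fq => ∀ i, (a i).Monic)
      (fun a => ((∏ i, a i) - A).degree < ((h + 1 : ℕ) : WithBot ℕ))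
  rw [ecard1]
  -- second decomposition: partition by the degree vector
  set D := {d : Fin k → ℕ // ∑ i, d i = n} with hD
  letI : Fintype D := Fintype.ofEquiv _ (Sym.equivNatSumOfFintype (Fin k) n)
  have hdegsum : ∀ x : U, ∑ i, (x.1 i).natDegree = n := by
    intro x
    rw [← Polynomial.natDegree_prod _ _ (fun i _ => (x.2.1 i).ne_zero)]
    exact hUdeg x.1 x.2
  set δ : U → D := fun x => ⟨fun i => (x.1 i).natDegree, hdegsum x⟩ with hδ
  have efib : ∀ dd : D, {x : U // δ x = dd} ≃
      {a : Fin k → Polynomial Fq //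
        (∀ i, (a i).Monic ∧ (a i).natDegree = dd.1 i) ∧
          ((∏ i, a i) - A).degree < ((h + 1 : ℕ) : WithBot ℕ)} := by
    intro dd
    exact
      { toFun := fun x => ⟨x.1.1,
          ⟨fun i => ⟨x.1.2.1 i, congrFun (congrArg Subtype.val x.2) i⟩, x.1.2.2⟩⟩
        invFun := fun y => ⟨⟨y.1, fun i => (y.2.1 i).1, y.2.2⟩,
          Subtype.ext (funext fun i => (y.2.1 i).2)⟩
        left_inv := fun x => Subtype.ext (Subtype.ext rfl)
        right_inv := fun y => Subtype.ext rfl }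
  have hfibcard : ∀ dd : D, Nat.card {x : U // δ x = dd} = Fintype.card Fq ^ (h + 1) := by
    intro dd
    obtain ⟨i₀, hi₀⟩ := exists_big hk hcond dd.1 dd.2
    rw [Nat.card_congr (efib dd)]
    exact card_fiber hA hAdeg hhn dd.1 dd.2 i₀ hi₀
  calc Nat.card U = Nat.card (Σ dd : D, {x : U // δ x = dd}) :=
        (Nat.card_congr (Equiv.sigmaFiberEquiv δ)).symm
    _ = ∑ dd : D, Nat.card {x : U // δ x = dd} := nat_card_sigma _
    _ = ∑ _dd : D, Fintype.card Fq ^ (h + 1) :=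
        Finset.sum_congr rfl (fun dd _ => hfibcard dd)
    _ = Fintype.card Fq ^ (h + 1) * (n + k - 1).choose (k - 1) := by
        rw [Finset.sum_const, Finset.card_univ, smul_eq_mul, ← Nat.card_eq_fintype_card,
          card_compositions k n (by omega), mul_comm]
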